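/- For σ > 0 and complex z with |arg z| < π/2, one has e^{-z} = (1/2πi) ∫_{σ-i∞}^{σ+i∞} z^{-t} Γ(t) dt, where the integral is along the vertical line Re t = σ. -/

import Mathlib

open Complex Real MeasureTheory Set Filter

namespace MellinBarnesAux

/-- Real comparison integrand is integrable. -/
lemma real_integrable {a c : ℝ} (ha : 0 < a) (hc : 0 < c) :
    IntegrableOn (fun x : ℝ ↦ Real.exp (-(c * x)) * x ^ (a - 1)) (Ioi 0) := by
  have h0 := Real.GammaIntegral_convergent ha
  rw [show (0 : ℝ) = c * 0 by ring, ← integrableOn_Ioi_comp_mul_left_iff _ _ hc] at h0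
  have h1 : IntegrableOn (fun x : ℝ ↦ ((c : ℝ) ^ (a - 1))⁻¹ *
      (Real.exp (-(c * x)) * (c * x) ^ (a - 1))) (Ioi 0) := h0.const_mul _
  refine h1.congr_fun (fun x hx ↦ ?_) measurableSet_Ioi
  rw [mem_Ioi] at hx
  beta_reduce
  rw [Real.mul_rpow hc.le hx.le]
  have : (c : ℝ) ^ (a - 1) ≠ 0 := by positivity
  field_simp

/-- Complex integrand is integrable. -/
lemma complex_integrable {s z : ℂ} (hs : 0 < s.re) (hz : 0 < z.re) :
    IntegrableOn (fun x : ℝ ↦ (x : ℂ) ^ (s - 1) * Complex.exp (-(z * x))) (Ioi 0) := by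
  have hmeas : AEStronglyMeasurable (fun x : ℝ ↦ (x : ℂ) ^ (s - 1) * Complex.exp (-(z * x)))
      (volume.restrict (Ioi 0)) := by
    refine ContinuousOn.aestronglyMeasurable (ContinuousOn.mul ?_ ?_) measurableSet_Ioi
    · apply continuousOn_of_forall_continuousAt
      intro x hx
      exact (continuousAt_cpow_const <| ofReal_mem_slitPlane.2 hx).comp
        continuous_ofReal.continuousAt
    · exact (Complex.continuous_exp.comp (by continuity)).continuousOn
  refine Integrable.mono' (real_integrable hs hz).integrable hmeas ?_
  refine (ae_restrict_iff' measurableSet_Ioi).mpr (ae_of_all _ fun x hx ↦ ?_)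
  rw [mem_Ioi] at hx
  rw [norm_mul, Complex.norm_cpow_eq_rpow_re_of_pos hx, Complex.norm_exp]
  have : (-(z * x)).re = -(z.re * x) := by simp
  rw [this, sub_re, one_re, mul_comm]

/-- Key identity: for `Re s > 0`, `Re z > 0`,
`∫_0^∞ x^{s-1} e^{-z x} dx = Γ(s) z^{-s}`. -/
lemma integral_eq {s z : ℂ} (hs : 0 < s.re) (hz : 0 < z.re) :
    ∫ x : ℝ in Ioi 0, (x : ℂ) ^ (s - 1) * Complex.exp (-(z * x))
      = Complex.Gamma s * z ^ (-s) := by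
  set U : Set ℂ := {w : ℂ | 0 < w.re} with hU
  have hUopen : IsOpen U := isOpen_lt continuous_const Complex.continuous_re
  have hUpre : IsPreconnected U := (convex_halfSpace_re_gt 0).isPreconnected
  set G : ℂ → ℂ := fun w ↦ ∫ x : ℝ in Ioi 0, (x : ℂ) ^ (s - 1) * Complex.exp (-(w * x)) with hG
  set H : ℂ → ℂ := fun w ↦ Complex.Gamma s * w ^ (-s) with hH
  -- G is differentiable on U
  have hGdiff : DifferentiableOn ℂ G U := by
    intro w₀ hw₀
    have hw₀re : 0 < w₀.re := hw₀
    set ε : ℝ := w₀.re / 2 with hε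
    have hεpos : 0 < ε := by positivity
    have key := hasDerivAt_integral_of_dominated_loc_of_deriv_le (hs := Metric.ball_mem_nhds w₀ hεpos)
      (F := fun w (x : ℝ) ↦ (x : ℂ) ^ (s - 1) * Complex.exp (-(w * x)))
      (F' := fun w (x : ℝ) ↦ (x : ℂ) ^ (s - 1) * (Complex.exp (-(w * x)) * (-x)))
      (μ := volume.restrict (Ioi 0)) (x₀ := w₀)
      (bound := fun x : ℝ ↦ Real.exp (-(ε * x)) * x ^ ((s.re + 1) - 1))
      ?_ ?_ ?_ ?_ ?_ ?_
    · exact (key.2.differentiableAt).differentiableWithinAt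
    · filter_upwards [hUopen.mem_nhds hw₀] with w hw
      exact (complex_integrable hs hw).aestronglyMeasurable
    · exact (complex_integrable hs hw₀re).integrable
    · refine ContinuousOn.aestronglyMeasurable (ContinuousOn.mul ?_ ?_) measurableSet_Ioi
      · apply continuousOn_of_forall_continuousAt
        intro x hx
        exact (continuousAt_cpow_const <| ofReal_mem_slitPlane.2 hx).comp
          continuous_ofReal.continuousAt
      · exact ((Complex.continuous_exp.comp (by continuity)).mul (by continuity)).continuousOn
    · refine (ae_restrict_iff' measurableSet_Ioi).mpr (ae_of_all _ fun x hx w hw ↦ ?_)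
      rw [mem_Ioi] at hx
      have hwre : ε ≤ w.re := by
        have := Complex.abs_re_le_norm (w - w₀)
        have hlt : ‖w - w₀‖ < ε := by
          rwa [Metric.mem_ball, Complex.dist_eq] at hw
        have : |w.re - w₀.re| < ε := by
          calc |w.re - w₀.re| = |(w - w₀).re| := by rw [Complex.sub_re]
            _ ≤ ‖w - w₀‖ := Complex.abs_re_le_norm _
            _ < ε := hlt
        have := abs_lt.mp this
        simp only [hε] at this ⊢
        linarith [this.1]
      rw [norm_mul, norm_mul, Complex.norm_cpow_eq_rpow_re_of_pos hx, Complex.norm_exp]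
      have h1 : (-(w * x)).re = -(w.re * x) := by simp
      rw [h1, sub_re, one_re]
      have h2 : ‖(-(x : ℂ))‖ = x := by
        rw [norm_neg, Complex.norm_real, Real.norm_eq_abs, abs_of_pos hx]
      rw [h2]
      have hexp : Real.exp (-(w.re * x)) ≤ Real.exp (-(ε * x)) := by
        apply Real.exp_le_exp.mpr
        nlinarith
      calc x ^ (s.re - 1) * (Real.exp (-(w.re * x)) * x)
          ≤ x ^ (s.re - 1) * (Real.exp (-(ε * x)) * x) := by
            apply mul_le_mul_of_nonneg_left _ (Real.rpow_nonneg hx.le _)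
            exact mul_le_mul_of_nonneg_right hexp hx.le
        _ = Real.exp (-(ε * x)) * x ^ ((s.re + 1) - 1) := by
            rw [show (s.re + 1) - 1 = (s.re - 1) + 1 by ring,
              Real.rpow_add hx, Real.rpow_one]
            ring
    · exact (real_integrable (by linarith : (0:ℝ) < s.re + 1) hεpos).integrable
    · refine (ae_restrict_iff' measurableSet_Ioi).mpr (ae_of_all _ fun x hx w _ ↦ ?_)
      have hd : HasDerivAt (fun w : ℂ ↦ Complex.exp (-(w * x)))
          (Complex.exp (-(w * x)) * (-x)) w := by
        have h1 : HasDerivAt (fun w : ℂ ↦ -(w * x)) (-x) w := by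
          simpa using ((hasDerivAt_id w).mul_const (x : ℂ)).fun_neg
        exact h1.cexp
      exact hd.const_mul _
  have hGanalytic : AnalyticOnNhd ℂ G U := hGdiff.analyticOnNhd hUopen
  -- H is differentiable on U
  have hHdiff : DifferentiableOn ℂ H U := by
    intro w hw
    refine DifferentiableAt.differentiableWithinAt ?_
    have h0 : (w : ℂ) ∈ Complex.slitPlane := Complex.mem_slitPlane_iff.mpr (Or.inl hw)
    exact (((hasDerivAt_id w).cpow_const h0).differentiableAt).const_mul _
  have hHanalytic : AnalyticOnNhd ℂ H U := hHdiff.analyticOnNhd hUopen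
  -- They agree on positive reals
  have hreal : ∀ r : ℝ, 0 < r → G r = H r := by
    intro r hr
    have := Complex.integral_cpow_mul_exp_neg_mul_Ioi hs hr
    rw [hG, hH]
    simp only
    rw [this]
    rw [one_div, inv_cpow _ _ (by rw [Complex.arg_ofReal_of_nonneg hr.le]; positivity),
      ← Complex.cpow_neg]
    ring
  -- frequently equal near 1
  have hfreq : ∃ᶠ w in nhdsWithin (1 : ℂ) {(1 : ℂ)}ᶜ, G w = H w := by
    have htend : Tendsto (fun t : ℝ ↦ ((1 + t : ℝ) : ℂ)) (nhdsWithin 0 (Ioi 0))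
        (nhdsWithin 1 {(1 : ℂ)}ᶜ) := by
      rw [tendsto_nhdsWithin_iff]
      constructor
      · have hcont : Continuous (fun t : ℝ ↦ ((1 + t : ℝ) : ℂ)) := by continuity
        have h0 : ((1 + (0:ℝ) : ℝ) : ℂ) = 1 := by norm_num
        simpa [h0] using (hcont.tendsto 0).mono_left nhdsWithin_le_nhds
      · filter_upwards [self_mem_nhdsWithin] with t ht
        simp only [mem_compl_iff, mem_singleton_iff]
        intro h
        have h1 : (1 + t : ℝ) = 1 := by exact_mod_cast h
        have h2 : t = 0 := by linarith
        rw [h2] at ht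
        exact lt_irrefl 0 (mem_Ioi.mp ht)
    apply htend.frequently
    apply Eventually.frequently
    filter_upwards [self_mem_nhdsWithin] with t ht
    exact hreal (1 + t) (by linarith [mem_Ioi.mp ht])
  have heq := hGanalytic.eqOn_of_preconnected_of_frequently_eq hHanalytic hUpre
    (show (1 : ℂ) ∈ U by simp [hU]) hfreq
  exact heq hz

/-- Exponential decay of Gamma along vertical lines. -/
lemma gamma_bound {σ : ℝ} (hσ : 0 < σ) {θ : ℝ} (hθ : |θ| < π / 2) (y : ℝ) :
    ‖Complex.Gamma (σ + y * I)‖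
      ≤ (1 / Real.cos θ) ^ σ * Real.Gamma σ * Real.exp (-θ * y) := by
  have hθ' := abs_lt.mp hθ
  have hcos : 0 < Real.cos θ := Real.cos_pos_of_mem_Ioo ⟨hθ'.1, hθ'.2⟩
  set w : ℂ := Complex.exp (θ * I) with hw
  have hwre : w.re = Real.cos θ := by
    rw [hw, Complex.exp_re]
    simp
  have hwre' : 0 < w.re := hwre ▸ hcos
  set s : ℂ := σ + y * I with hs
  have hsre : s.re = σ := by simp [hs]
  have hkey := integral_eq (s := s) (z := w) (by rw [hsre]; exact hσ) hwre'
  -- bound the integral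
  have hbound : ‖Complex.Gamma s * w ^ (-s)‖
      ≤ (1 / Real.cos θ) ^ σ * Real.Gamma σ := by
    rw [← hkey]
    calc ‖∫ x : ℝ in Ioi 0, (x : ℂ) ^ (s - 1) * Complex.exp (-(w * x))‖
        ≤ ∫ x : ℝ in Ioi 0, ‖(x : ℂ) ^ (s - 1) * Complex.exp (-(w * x))‖ :=
          norm_integral_le_integral_norm _
      _ = ∫ x : ℝ in Ioi 0, x ^ (σ - 1) * Real.exp (-(Real.cos θ * x)) := by
          refine setIntegral_congr_fun measurableSet_Ioi (fun x hx ↦ ?_)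
          rw [mem_Ioi] at hx
          rw [norm_mul, Complex.norm_cpow_eq_rpow_re_of_pos hx, Complex.norm_exp]
          congr 1
          · rw [sub_re, one_re, hsre]
          · congr 1
            rw [← hwre]
            simp
      _ = (1 / Real.cos θ) ^ σ * Real.Gamma σ :=
          Real.integral_rpow_mul_exp_neg_mul_Ioi hσ hcos
  have habsw : ‖w ^ (-s)‖ = Real.exp (θ * y) := by
    have hwne : w ≠ 0 := Complex.exp_ne_zero _
    rw [Complex.cpow_def_of_ne_zero hwne, Complex.norm_exp]
    have hlog : Complex.log w = θ * I := by
      rw [hw]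
      apply Complex.log_exp
      · simpa using hθ'.1.trans_le' (by linarith [Real.pi_pos] : -π ≤ -(π/2))
      · simp only [Complex.mul_im, Complex.ofReal_re, Complex.I_im, Complex.ofReal_im,
          Complex.I_re, mul_zero, mul_one, zero_mul, add_zero]
        linarith [Real.pi_pos, hθ'.2]
    rw [hlog]
    congr 1
    rw [hs]
    simp [Complex.mul_re]
  rw [norm_mul, habsw] at hbound
  have h2 : ‖Complex.Gamma s‖ * Real.exp (θ * y) ≤
      (1 / Real.cos θ) ^ σ * Real.Gamma σ := hbound
  have h3 : Real.exp (-θ * y) = (Real.exp (θ * y))⁻¹ := by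
    rw [← Real.exp_neg]; ring_nf
  rw [h3, ← div_eq_mul_inv, le_div_iff₀ (Real.exp_pos _)]
  exact h2

/-- `exp (-δ|y|)` is integrable on `ℝ`. -/
lemma integrable_exp_neg_abs {δ : ℝ} (hδ : 0 < δ) :
    Integrable (fun y : ℝ ↦ Real.exp (-δ * |y|)) := by
  rw [← integrableOn_univ, ← @Iio_union_Ici _ _ (0 : ℝ), integrableOn_union,
    integrableOn_Ici_iff_integrableOn_Ioi]
  constructor
  · rw [← (Measure.measurePreserving_neg (volume : Measure ℝ)).integrableOn_comp_preimage
        (Homeomorph.neg ℝ).measurableEmbedding]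
    simp only [Function.comp_def, abs_neg, neg_preimage, neg_Iio, neg_zero]
    refine (exp_neg_integrableOn_Ioi 0 hδ).congr_fun (fun y hy ↦ ?_) measurableSet_Ioi
    rw [abs_of_pos hy]
  · refine (exp_neg_integrableOn_Ioi 0 hδ).congr_fun (fun y hy ↦ ?_) measurableSet_Ioi
    rw [abs_of_pos hy]

end MellinBarnesAux

/-- Mellin–Barnes representation of the exponential: for `σ > 0` and `z ≠ 0` with
`|arg z| < π/2`,
`e^{-z} = (1/2πi) ∫_{σ-i∞}^{σ+i∞} z^{-t} Γ(t) dt`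
where the contour is the vertical line `Re t = σ` (parametrized by `t = σ + iy`,
`dt = i dy`). -/
theorem exp_neg_eq_mellin_barnes (σ : ℝ) (hσ : 0 < σ) (z : ℂ) (hz : z ≠ 0)
    (harg : |z.arg| < π / 2) :
    Complex.exp (-z)
      = (2 * π * I)⁻¹ *
        ∫ y : ℝ, z ^ (-((σ : ℂ) + y * I)) * Complex.Gamma ((σ : ℂ) + y * I) * I := by
  have harg' := abs_lt.mp harg
  have hzre : 0 < z.re := by
    have hcos : 0 < Real.cos z.arg := Real.cos_pos_of_mem_Ioo ⟨harg'.1, harg'.2⟩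
    have habs : 0 < ‖z‖ := norm_pos_iff.mpr hz
    have := Complex.cos_arg hz
    have : z.re = ‖z‖ * Real.cos z.arg := by
      rw [this]; field_simp
    rw [this]; positivity
  set f : ℝ → ℂ := fun x ↦ Complex.exp (-(z * x)) with hf
  have hmc : MellinConvergent f σ := by
    rw [MellinConvergent]
    have := MellinBarnesAux.complex_integrable (s := (σ : ℂ)) (by simpa using hσ) hzre
    simpa [smul_eq_mul] using this
  have hmellin : ∀ y : ℝ, mellin f ((σ : ℂ) + y * I)
      = Complex.Gamma ((σ : ℂ) + y * I) * z ^ (-((σ : ℂ) + y * I)) := by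
    intro y
    rw [mellin]
    simp_rw [smul_eq_mul]
    exact MellinBarnesAux.integral_eq (by simpa using hσ) hzre
  -- vertical integrability
  set a : ℝ := |z.arg| with ha
  set θ : ℝ := (a + π / 2) / 2 with hθ
  have ha0 : 0 ≤ a := abs_nonneg _
  have haθ : a < θ := by rw [hθ]; linarith
  have hθπ : θ < π / 2 := by rw [hθ]; linarith
  have hθ0 : 0 ≤ θ := by rw [hθ]; linarith
  have hδ : 0 < θ - a := by linarith
  have hcosθ : 0 < Real.cos θ := Real.cos_pos_of_mem_Ioo ⟨by linarith [Real.pi_pos], hθπ⟩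
  set C : ℝ := (1 / Real.cos θ) ^ σ * Real.Gamma σ * ‖z‖ ^ (-σ) with hC
  have hCpos : 0 ≤ C := by
    rw [hC]
    have := Real.Gamma_pos_of_pos hσ
    positivity
  have hcont : Continuous fun y : ℝ ↦
      Complex.Gamma ((σ : ℂ) + y * I) * z ^ (-((σ : ℂ) + y * I)) := by
    apply Continuous.mul
    · rw [continuous_iff_continuousAt]
      intro y
      have hG : ContinuousAt Complex.Gamma ((σ : ℂ) + y * I) := by
        refine (Complex.differentiableAt_Gamma _ fun m ↦ ?_).continuousAt
        intro h
        have h2 : ((σ : ℂ) + y * I).re = σ := by simp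
        rw [h] at h2
        simp only [Complex.neg_re, Complex.natCast_re] at h2
        have : (0:ℝ) ≤ (m : ℝ) := Nat.cast_nonneg m
        linarith
      have hc2 : ContinuousAt (fun x : ℝ ↦ (σ : ℂ) + x * I) y := by fun_prop
      exact ContinuousAt.comp (g := Complex.Gamma) hG hc2
    · have hrw : (fun y : ℝ ↦ z ^ (-((σ : ℂ) + y * I)))
          = fun y : ℝ ↦ Complex.exp (Complex.log z * (-((σ : ℂ) + y * I))) := by
        funext y
        rw [Complex.cpow_def_of_ne_zero hz]
      rw [hrw]
      fun_prop
  have hbound : ∀ y : ℝ,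
      ‖Complex.Gamma ((σ : ℂ) + y * I) * z ^ (-((σ : ℂ) + y * I))‖
        ≤ C * Real.exp (-(θ - a) * |y|) := by
    intro y
    set θy : ℝ := if 0 ≤ y then θ else -θ with hθy
    have hθyabs : |θy| < π / 2 := by
      rw [hθy]
      rcases le_or_gt 0 y with h | h
      · rw [if_pos h, _root_.abs_of_nonneg hθ0]; exact hθπ
      · rw [if_neg (not_le.mpr h), abs_neg, _root_.abs_of_nonneg hθ0]; exact hθπ
    have hcosθy : Real.cos θy = Real.cos θ := by
      rw [hθy]; rcases le_or_gt 0 y with h | h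
      · rw [if_pos h]
      · rw [if_neg (not_le.mpr h), Real.cos_neg]
    have hθyy : -θy * y = -θ * |y| := by
      rw [hθy]; rcases le_or_gt 0 y with h | h
      · rw [if_pos h, _root_.abs_of_nonneg h]
      · rw [if_neg (not_le.mpr h), _root_.abs_of_neg h]; ring
    have hΓ := MellinBarnesAux.gamma_bound hσ hθyabs y
    rw [hcosθy, hθyy] at hΓ
    have hzpow : ‖z ^ (-((σ : ℂ) + y * I))‖
        = ‖z‖ ^ (-σ) * Real.exp (z.arg * y) := by
      rw [Complex.norm_cpow_of_ne_zero hz]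
      have h1 : (-((σ : ℂ) + y * I)).re = -σ := by simp
      have h2 : (-((σ : ℂ) + y * I)).im = -y := by simp
      rw [h1, h2, mul_neg, Real.exp_neg, div_eq_mul_inv, inv_inv]
    rw [norm_mul, hzpow]
    have key : Real.exp (-θ * |y|) * Real.exp (z.arg * y)
        ≤ Real.exp (-(θ - a) * |y|) := by
      rw [← Real.exp_add, Real.exp_le_exp]
      have : z.arg * y ≤ a * |y| := by
        calc z.arg * y ≤ |z.arg * y| := le_abs_self _
          _ = a * |y| := by rw [abs_mul]
      nlinarith [abs_nonneg y]
    calc ‖Complex.Gamma ((σ : ℂ) + y * I)‖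
          * (‖z‖ ^ (-σ) * Real.exp (z.arg * y))
        ≤ ((1 / Real.cos θ) ^ σ * Real.Gamma σ * Real.exp (-θ * |y|))
          * (‖z‖ ^ (-σ) * Real.exp (z.arg * y)) := by
          apply mul_le_mul_of_nonneg_right hΓ
          positivity
      _ = ((1 / Real.cos θ) ^ σ * Real.Gamma σ * ‖z‖ ^ (-σ))
          * (Real.exp (-θ * |y|) * Real.exp (z.arg * y)) := by ring
      _ ≤ C * Real.exp (-(θ - a) * |y|) := by
          rw [hC]
          apply mul_le_mul_of_nonneg_left key
          have := Real.Gamma_pos_of_pos hσ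
          positivity
  have hFf : Complex.VerticalIntegrable (mellin f) σ := by
    rw [Complex.VerticalIntegrable]
    have hbdint : Integrable (fun y : ℝ ↦ C * Real.exp (-(θ - a) * |y|)) :=
      (MellinBarnesAux.integrable_exp_neg_abs hδ).const_mul C
    refine Integrable.mono' hbdint ?_ (ae_of_all _ fun y ↦ ?_)
    · exact hcont.aestronglyMeasurable.congr
        (ae_of_all _ fun y ↦ (hmellin y).symm)
    · rw [hmellin y]
      exact hbound y
  have hcf : ContinuousAt f 1 := by fun_prop
  have hinv := mellinInv_mellin_eq σ f one_pos hmc hFf hcf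
  rw [mellinInv] at hinv
  simp only [Complex.ofReal_one, Complex.one_cpow, one_smul] at hinv
  have hfval : f 1 = Complex.exp (-z) := by
    rw [hf]
    norm_num
  rw [hfval] at hinv
  have hS : (∫ y : ℝ, mellin f ((σ : ℂ) + y * I))
      = ∫ y : ℝ, Complex.Gamma ((σ : ℂ) + y * I) * z ^ (-((σ : ℂ) + y * I)) :=
    integral_congr_ae (ae_of_all _ fun y ↦ hmellin y)
  rw [hS] at hinv
  have hint : (∫ y : ℝ, z ^ (-((σ : ℂ) + y * I)) * Complex.Gamma ((σ : ℂ) + y * I) * I)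
      = (∫ y : ℝ, Complex.Gamma ((σ : ℂ) + y * I) * z ^ (-((σ : ℂ) + y * I))) * I := by
    rw [← integral_mul_const]
    exact integral_congr_ae (ae_of_all _ fun y ↦ by ring)
  rw [hint, ← hinv]
  rw [real_smul]
  have hπ : (π : ℂ) ≠ 0 := Complex.ofReal_ne_zero.mpr Real.pi_ne_zero
  have hI : (I : ℂ) ≠ 0 := Complex.I_ne_zero
  push_cast
  field_simp
  simp_rw [mul_comm _ I]
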